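/- arXiv:1411.3650 — 5 statements merged into one kernel-verified Lean document; each statement's English description precedes it below -/
import Mathlib

section
/- (Greedy optimality of DUM / Edmonds) Let E be a finite set of L items, w : E → ℝ a vector of positive item utilities, and f : 2^E → ℝ a monotonically increasing submodular function with f(∅) = 0. Let A* = (a*₁, …, a*_L) be an ordering of E with w(a*₁) ≥ w(a*₂) ≥ … ≥ w(a*_L). Then A* maximizes the diversity-weighted utility objective over all orderings: for every ordering A = (a₁, …, a_L) of E, ∑_{k=1}^{L} g_{A*}(a*_k) · w(a*_k) ≥ ∑_{k=1}^{L} g_A(a_k) · w(a_k). -/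
open Finset

/-- The set of the first `k` items of the ordering `A`, i.e. `A_k`. -/
def prefixSet {E : Type*} [DecidableEq E] (A : List E) (k : ℕ) : Finset E :=
  (A.take k).toFinset

/-- The marginal gain `g_A(a_k) = f(A_{k-1} ∪ {a_k}) − f(A_{k-1})` of the item at
(0-based) position `i` of the ordering `A`. -/
def gain {E : Type*} [DecidableEq E] (f : Finset E → ℝ) (A : List E) (i : Fin A.length) : ℝ :=
  f (insert (A.get i) (prefixSet A i.val)) - f (prefixSet A i.val)

section Aux

variable {E : Type*} [DecidableEq E]

lemma prefixSet_succ (A : List E) (n : ℕ) (h : n < A.length) :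
    prefixSet A (n + 1) = insert (A.get ⟨n, h⟩) (prefixSet A n) := by
  ext x
  simp only [prefixSet, List.take_succ, List.getElem?_eq_getElem h, List.toFinset_append,
    List.mem_toFinset, Finset.mem_union, Finset.mem_insert, Option.toList_some,
    List.mem_singleton, List.get_eq_getElem]
  tauto

lemma prefixSet_stab (A : List E) (n : ℕ) (h : A.length ≤ n) :
    prefixSet A n = A.toFinset := by
  simp only [prefixSet, List.take_of_length_le h]

lemma get_not_mem_prefixSet (A : List E) (hnd : A.Nodup) (n : ℕ) (h : n < A.length) :
    A.get ⟨n, h⟩ ∉ prefixSet A n := by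
  intro hmem
  simp only [prefixSet, List.mem_toFinset] at hmem
  obtain ⟨i, hi⟩ := List.mem_iff_get.mp hmem
  have hlen : i.val < n := by
    have := i.2; simp only [List.length_take] at this; omega
  have hget : (A.take n).get i = A.get ⟨i.val, by have := i.2; simp at this; omega⟩ := by
    simp
  rw [hget] at hi
  have := hnd.get_inj_iff.mp hi
  have : i.val = n := congrArg Fin.val this
  omega

lemma mem_prefixSet_iff (A : List E) (n : ℕ) (x : E) :
    x ∈ prefixSet A n ↔ ∃ i : Fin A.length, i.val < n ∧ A.get i = x := by
  simp only [prefixSet, List.mem_toFinset]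
  constructor
  · intro hx
    obtain ⟨i, hi⟩ := List.mem_iff_get.mp hx
    have hlen : i.val < n := by have := i.2; simp only [List.length_take] at this; omega
    have hlen2 : i.val < A.length := by have := i.2; simp at this; omega
    refine ⟨⟨i.val, hlen2⟩, hlen, ?_⟩
    rw [← hi]
    simp
  · rintro ⟨i, hin, rfl⟩
    have hlt : i.val < (A.take n).length := by simp; omega
    have : (A.take n).get ⟨i.val, hlt⟩ = A.get ⟨i.val, by have := i.2; omega⟩ := by
      simp
    rw [show A.get i = (A.take n).get ⟨i.val, hlt⟩ by rw [this]]
    exact List.get_mem _ _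

lemma sum_gain_filter_le (f : Finset E → ℝ) (hf0 : f ∅ = 0)
    (hsub : ∀ X Y : Finset E, f (X ∪ Y) + f (X ∩ Y) ≤ f X + f Y)
    (A : List E) (hnd : A.Nodup) (P : E → Prop) [DecidablePred P] (n : ℕ) :
    ∑ i ∈ Finset.range n,
        (if h : i < A.length then (if P (A.get ⟨i, h⟩) then gain f A ⟨i, h⟩ else 0) else 0)
      ≤ f ((prefixSet A n).filter P) := by
  induction n with
  | zero => simp [prefixSet, hf0]
  | succ n ih =>
    rw [Finset.sum_range_succ]
    by_cases h : n < A.length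
    · rw [dif_pos h]
      set a := A.get ⟨n, h⟩ with ha
      have hstep := prefixSet_succ A n h
      by_cases hP : P a
      · rw [if_pos hP]
        have hnm : a ∉ prefixSet A n := get_not_mem_prefixSet A hnd n h
        have hfil : (prefixSet A (n + 1)).filter P
            = insert a ((prefixSet A n).filter P) := by
          rw [hstep, Finset.filter_insert, if_pos hP]
        have h1 := hsub (insert a ((prefixSet A n).filter P)) (prefixSet A n)
        have h2 : insert a ((prefixSet A n).filter P) ∪ prefixSet A n
            = insert a (prefixSet A n) := by
          rw [Finset.insert_union, Finset.union_eq_right.mpr (Finset.filter_subset _ _)]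
        have h3 : insert a ((prefixSet A n).filter P) ∩ prefixSet A n
            = (prefixSet A n).filter P := by
          ext x
          simp only [Finset.mem_inter, Finset.mem_insert, Finset.mem_filter]
          constructor
          · rintro ⟨h' | h', hx⟩
            · exact absurd (h' ▸ hx) hnm
            · exact h'
          · rintro ⟨hx, hPx⟩; exact ⟨Or.inr ⟨hx, hPx⟩, hx⟩
        rw [h2, h3] at h1
        have hg : gain f A ⟨n, h⟩
            = f (insert a (prefixSet A n)) - f (prefixSet A n) := rfl
        rw [hfil, hg]
        linarith
      · rw [if_neg hP]
        have hfil : (prefixSet A (n + 1)).filter P = (prefixSet A n).filter P := by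
          rw [hstep, Finset.filter_insert, if_neg hP]
        rw [hfil, add_zero]; exact ih
    · rw [dif_neg h, add_zero]
      have hpp : prefixSet A (n + 1) = prefixSet A n := by
        rw [prefixSet_stab A (n + 1) (by omega), prefixSet_stab A n (by omega)]
      rw [hpp]; exact ih

lemma sum_gain_filter_eq (f : Finset E → ℝ) (hf0 : f ∅ = 0)
    (A : List E) (hnd : A.Nodup) (P : E → Prop) [DecidablePred P]
    (hdc : ∀ i j : Fin A.length, i ≤ j → P (A.get j) → P (A.get i)) (n : ℕ) :
    ∑ i ∈ Finset.range n,
        (if h : i < A.length then (if P (A.get ⟨i, h⟩) then gain f A ⟨i, h⟩ else 0) else 0)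
      = f ((prefixSet A n).filter P) := by
  induction n with
  | zero => simp [prefixSet, hf0]
  | succ n ih =>
    rw [Finset.sum_range_succ]
    by_cases h : n < A.length
    · rw [dif_pos h]
      set a := A.get ⟨n, h⟩ with ha
      have hstep := prefixSet_succ A n h
      by_cases hP : P a
      · rw [if_pos hP]
        -- everything in the prefix satisfies P
        have hall : (prefixSet A n).filter P = prefixSet A n := by
          apply Finset.filter_true_of_mem
          intro x hx
          obtain ⟨i, hin, rfl⟩ := (mem_prefixSet_iff A n x).mp hx
          exact hdc i ⟨n, h⟩ (by exact Fin.mk_le_mk.mpr (by omega)) hP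
        have hfil : (prefixSet A (n + 1)).filter P = insert a (prefixSet A n) := by
          rw [hstep, Finset.filter_insert, if_pos hP, hall]
        have hg : gain f A ⟨n, h⟩
            = f (insert a (prefixSet A n)) - f (prefixSet A n) := rfl
        rw [hfil, hg, ih, hall]
        ring
      · rw [if_neg hP]
        have hfil : (prefixSet A (n + 1)).filter P = (prefixSet A n).filter P := by
          rw [hstep, Finset.filter_insert, if_neg hP]
        rw [hfil, add_zero]; exact ih
    · rw [dif_neg h, add_zero]
      have hpp : prefixSet A (n + 1) = prefixSet A n := by
        rw [prefixSet_stab A (n + 1) (by omega), prefixSet_stab A n (by omega)]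
      rw [hpp]; exact ih

lemma range_sum_eq_fin_sum (f : Finset E → ℝ) (A : List E) (P : E → Prop) [DecidablePred P] :
    ∑ i ∈ Finset.range A.length,
        (if h : i < A.length then (if P (A.get ⟨i, h⟩) then gain f A ⟨i, h⟩ else 0) else 0)
      = ∑ i : Fin A.length, (if P (A.get i) then gain f A i else 0) := by
  rw [← Fin.sum_univ_eq_sum_range
    (fun i => if h : i < A.length then (if P (A.get ⟨i, h⟩) then gain f A ⟨i, h⟩ else 0) else 0)]
  refine Finset.sum_congr rfl fun i _ => ?_
  rw [dif_pos i.2]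

variable [Fintype E]

lemma prefixSet_full (A : List E) (hfull : ∀ e : E, e ∈ A) :
    prefixSet A A.length = Finset.univ := by
  rw [prefixSet_stab A _ le_rfl]
  ext x; simp [hfull x]

lemma sum_gain_le_univ (f : Finset E → ℝ) (hf0 : f ∅ = 0)
    (hsub : ∀ X Y : Finset E, f (X ∪ Y) + f (X ∩ Y) ≤ f X + f Y)
    (A : List E) (hnd : A.Nodup) (hfull : ∀ e : E, e ∈ A)
    (P : E → Prop) [DecidablePred P] :
    ∑ i : Fin A.length, (if P (A.get i) then gain f A i else 0)
      ≤ f (Finset.univ.filter P) := by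
  rw [← range_sum_eq_fin_sum, ← prefixSet_full A hfull]
  exact sum_gain_filter_le f hf0 hsub A hnd P A.length

lemma sum_gain_eq_univ (f : Finset E → ℝ) (hf0 : f ∅ = 0)
    (A : List E) (hnd : A.Nodup) (hfull : ∀ e : E, e ∈ A)
    (P : E → Prop) [DecidablePred P]
    (hdc : ∀ i j : Fin A.length, i ≤ j → P (A.get j) → P (A.get i)) :
    ∑ i : Fin A.length, (if P (A.get i) then gain f A i else 0)
      = f (Finset.univ.filter P) := by
  rw [← range_sum_eq_fin_sum, ← prefixSet_full A hfull]
  exact sum_gain_filter_eq f hf0 A hnd P hdc A.length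

lemma telescope (L : ℕ) (F : ℕ → ℝ) (hanti : ∀ m n : ℕ, m ≤ n → F n ≤ F m)
    (hL : F L = 0) (v : ℝ) (p : ℕ) (hp : p < L) (hpv : F p = v) :
    ∑ k ∈ Finset.range L, (if F k ≤ v then F k - F (k + 1) else 0) = v := by
  classical
  have hex : ∃ n, F n ≤ v := ⟨p, le_of_eq hpv⟩
  set j := Nat.find hex with hj
  have hjspec : F j ≤ v := Nat.find_spec hex
  have hjle : j ≤ p := Nat.find_le (le_of_eq hpv)
  have hFj : F j = v := le_antisymm hjspec (hpv ▸ hanti j p hjle)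
  have hjL : j ≤ L := le_trans hjle (le_of_lt hp)
  have key : ∀ i, i ≤ L - j →
      ∑ k ∈ Finset.Ico (L - i) L, (if F k ≤ v then F k - F (k + 1) else 0) = F (L - i) := by
    intro i
    induction i with
    | zero => intro _; simp [hL]
    | succ i ih =>
      intro hi
      have hm : L - (i + 1) < L := by omega
      have h1 : L - (i + 1) + 1 = L - i := by omega
      have hjm : j ≤ L - (i + 1) := by omega
      have hFm : F (L - (i + 1)) ≤ v := le_trans (hFj ▸ hanti j _ hjm) le_rfl
      rw [Finset.sum_eq_sum_Ico_succ_bot hm, if_pos hFm, h1, ih (by omega)]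
      ring
  have main := key (L - j) le_rfl
  have hLLj : L - (L - j) = j := by omega
  rw [hLLj] at main
  rw [Finset.range_eq_Ico, ← Finset.sum_Ico_consecutive _ (Nat.zero_le j) hjL]
  have h0 : ∑ k ∈ Finset.Ico 0 j, (if F k ≤ v then F k - F (k + 1) else 0) = 0 := by
    apply Finset.sum_eq_zero
    intro k hk
    simp only [Finset.mem_Ico] at hk
    rw [if_neg (Nat.find_min hex hk.2)]
  rw [h0, zero_add, main, hFj]

end Aux

/-- Greedy optimality of DUM: the ordering of `E` by decreasing utility maximizes the
diversity-weighted utility objective `∑_k g_A(a_k) · w(a_k)` over all orderings. -/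
theorem stmt_2 {E : Type*} [Fintype E] [DecidableEq E]
    (f : Finset E → ℝ) (hf0 : f ∅ = 0)
    (hmono : ∀ (X : Finset E) (e : E), e ∉ X → f X ≤ f (insert e X))
    (hsub : ∀ X Y : Finset E, f (X ∪ Y) + f (X ∩ Y) ≤ f X + f Y)
    (w : E → ℝ) (hw : ∀ e : E, 0 < w e)
    (Astar : List E) (hnodupStar : Astar.Nodup) (hfullStar : ∀ e : E, e ∈ Astar)
    (hsorted : Astar.Pairwise (fun a b => w b ≤ w a))
    (A : List E) (hnodup : A.Nodup) (hfull : ∀ e : E, e ∈ A) :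
    ∑ i : Fin A.length, gain f A i * w (A.get i) ≤
      ∑ i : Fin Astar.length, gain f Astar i * w (Astar.get i) := by
  classical
  set F : ℕ → ℝ := fun n => if h : n < Astar.length then w (Astar.get ⟨n, h⟩) else 0 with hF
  have hanti : ∀ m n : ℕ, m ≤ n → F n ≤ F m := by
    intro m n hmn
    by_cases hm : m < Astar.length
    · by_cases hn : n < Astar.length
      · simp only [hF, dif_pos hm, dif_pos hn]
        rcases eq_or_lt_of_le hmn with rfl | hlt
        · exact le_rfl
        · exact hsorted.rel_get_of_lt (by exact Fin.mk_lt_mk.mpr hlt)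
      · simp only [hF, dif_pos hm, dif_neg hn]
        exact (hw _).le
    · have hn : ¬ n < Astar.length := by omega
      simp only [hF, dif_neg hm, dif_neg hn, le_refl]
  have hFL : F Astar.length = 0 := dif_neg (lt_irrefl _)
  -- weight decomposition
  have hdecomp : ∀ e : E,
      ∑ k : Fin Astar.length, (if F k.val ≤ w e then F k.val - F (k.val + 1) else 0) = w e := by
    intro e
    obtain ⟨p, hpe⟩ := List.mem_iff_get.mp (hfullStar e)
    have hFp : F p.val = w e := by
      simp only [hF, dif_pos p.2, Fin.eta]; rw [hpe]
    have := telescope Astar.length F hanti hFL (w e) p.val p.2 hFp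
    exact (Fin.sum_univ_eq_sum_range
      (fun k => if F k ≤ w e then F k - F (k + 1) else 0) Astar.length).trans this
  -- rearranged objective
  have step : ∀ B : List E,
      ∑ i : Fin B.length, gain f B i * w (B.get i)
        = ∑ k : Fin Astar.length,
            (∑ i : Fin B.length, if F k.val ≤ w (B.get i) then gain f B i else 0)
              * (F k.val - F (k.val + 1)) := by
    intro B
    calc ∑ i : Fin B.length, gain f B i * w (B.get i)
        = ∑ i : Fin B.length, ∑ k : Fin Astar.length,
            (if F k.val ≤ w (B.get i) then gain f B i * (F k.val - F (k.val + 1)) else 0) := by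
          refine Finset.sum_congr rfl fun i _ => ?_
          conv_lhs => rw [← hdecomp (B.get i)]
          rw [Finset.mul_sum]
          exact Finset.sum_congr rfl fun k _ => by rw [mul_ite, mul_zero]
      _ = ∑ k : Fin Astar.length, ∑ i : Fin B.length,
            (if F k.val ≤ w (B.get i) then gain f B i * (F k.val - F (k.val + 1)) else 0) :=
          Finset.sum_comm
      _ = ∑ k : Fin Astar.length,
            (∑ i : Fin B.length, if F k.val ≤ w (B.get i) then gain f B i else 0)
              * (F k.val - F (k.val + 1)) := by
          refine Finset.sum_congr rfl fun k _ => ?_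
          rw [Finset.sum_mul]
          exact Finset.sum_congr rfl fun i _ => by rw [ite_mul, zero_mul]
  rw [step A, step Astar]
  apply Finset.sum_le_sum
  intro k _
  have hck : 0 ≤ F k.val - F (k.val + 1) := sub_nonneg.mpr (hanti k.val (k.val + 1) (by omega))
  apply mul_le_mul_of_nonneg_right _ hck
  have hle := sum_gain_le_univ f hf0 hsub A hnodup hfull (fun e => F k.val ≤ w e)
  have hdc : ∀ i j : Fin Astar.length, i ≤ j →
      (fun e => F k.val ≤ w e) (Astar.get j) → (fun e => F k.val ≤ w e) (Astar.get i) := by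
    intro i j hij hj
    rcases eq_or_lt_of_le hij with rfl | hlt
    · exact hj
    · exact le_trans hj (hsorted.rel_get_of_lt hlt)
  have heq := sum_gain_eq_univ f hf0 Astar hnodupStar hfullStar (fun e => F k.val ≤ w e) hdc
  rw [heq]
  exact hle
end

section
/- (Greedy solves the maximum-weight basis problem) Let E be a finite set, f : 2^E → ℝ a monotonically increasing submodular function with f(∅) = 0, and w : E → ℝ a vector of nonnegative weights. Let A* = (a*₁, …, a*_L) be an ordering of E with w(a*₁) ≥ … ≥ w(a*_L), and let x* ∈ ℝ^E be its gains vector, x*(a*_k) = f(A*_{k-1} ∪ {a*_k}) − f(A*_{k-1}). Then x* maximizes the linear objective ⟨w, x⟩ = ∑_{e∈E} w(e) x(e) over the independence polyhedron P_M = {x ∈ ℝ^E : x ≥ 0 and ∑_{e∈X} x(e) ≤ f(X) for all X ⊆ E}; i.e., ⟨w, x⟩ ≤ ⟨w, x*⟩ for every x ∈ P_M. -/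
open Finset

lemma prefix_step {E : Type*} [DecidableEq E] (A : List E) (hn : A.Nodup) {k : ℕ}
    (hk : k < A.length) :
    A.get ⟨k, hk⟩ ∉ prefixSet A k ∧
      prefixSet A (k + 1) = insert (A.get ⟨k, hk⟩) (prefixSet A k) := by
  have ht : A.take (k + 1) = A.take k ++ [A.get ⟨k, hk⟩] := by
    rw [← List.take_concat_get hk, List.concat_eq_append]; rfl
  have hnd : (A.take (k + 1)).Nodup := hn.sublist (List.take_sublist _ _)
  rw [ht, List.nodup_append] at hnd
  constructor
  · intro hmem
    exact hnd.2.2 _ (by simpa [prefixSet] using hmem) _ (by simp) rfl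
  · ext e
    simp only [prefixSet, ht, List.toFinset_append, Finset.mem_union, List.mem_toFinset,
      List.toFinset_cons, List.toFinset_nil, insert_empty_eq, Finset.mem_insert,
      Finset.mem_singleton]
    tauto

lemma abel_sum (W y P : ℕ → ℝ) (hP0 : P 0 = 0) (hstep : ∀ k, P (k + 1) = P k + y k)
    (n : ℕ) :
    ∑ k ∈ Finset.range n, W k * y k
      = ∑ k ∈ Finset.range n, (W k - W (k + 1)) * P (k + 1) + W n * P n := by
  induction n with
  | zero => simp [hP0]
  | succ n ih =>
      rw [Finset.sum_range_succ, Finset.sum_range_succ, ih, hstep n]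
      ring

/-- The gains vector of the ordering by decreasing weight maximizes `⟨w, x⟩` over the
independence polyhedron `P_M`. -/
theorem stmt_4 {E : Type*} [Fintype E] [DecidableEq E]
    (f : Finset E → ℝ) (hf0 : f ∅ = 0)
    (hmono : ∀ (X : Finset E) (e : E), e ∉ X → f X ≤ f (insert e X))
    (hsub : ∀ X Y : Finset E, f (X ∪ Y) + f (X ∩ Y) ≤ f X + f Y)
    (w : E → ℝ) (hw : ∀ e : E, 0 ≤ w e)
    (Astar : List E) (hnodup : Astar.Nodup) (hfull : ∀ e : E, e ∈ Astar)
    (hsorted : Astar.Pairwise (fun a b => w b ≤ w a))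
    (xstar : E → ℝ) (hxstar : ∀ i : Fin Astar.length, xstar (Astar.get i) = gain f Astar i) :
    ∀ x : E → ℝ, (∀ e : E, 0 ≤ x e) → (∀ X : Finset E, ∑ e ∈ X, x e ≤ f X) →
      ∑ e : E, w e * x e ≤ ∑ e : E, w e * xstar e := by
  intro x hx0 hxP
  set L := Astar.length with hL
  set Wf : ℕ → ℝ := fun k => if h : k < L then w (Astar.get ⟨k, h⟩) else 0 with hWf
  -- key summation identity, for any y
  have key : ∀ y : E → ℝ, ∑ e : E, w e * y e
      = ∑ k ∈ Finset.range L, (Wf k - Wf (k + 1)) * (∑ e ∈ prefixSet Astar (k + 1), y e) := by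
    intro y
    set yf : ℕ → ℝ := fun k => if h : k < L then y (Astar.get ⟨k, h⟩) else 0 with hyf
    set P : ℕ → ℝ := fun k => ∑ e ∈ prefixSet Astar k, y e with hP
    have hbij : Function.Bijective (fun i : Fin L => Astar.get i) := by
      constructor
      · exact List.nodup_iff_injective_get.mp hnodup
      · intro e
        obtain ⟨i, hi⟩ := List.mem_iff_get.mp (hfull e)
        exact ⟨i, hi⟩
    have h1 : ∑ e : E, w e * y e = ∑ i : Fin L, w (Astar.get i) * y (Astar.get i) :=
      (Fintype.sum_bijective _ hbij _ _ (fun i => rfl)).symm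
    have h2 : ∑ i : Fin L, w (Astar.get i) * y (Astar.get i)
        = ∑ k ∈ Finset.range L, Wf k * yf k := by
      rw [← Fin.sum_univ_eq_sum_range]
      apply Finset.sum_congr rfl
      intro i _
      simp [hWf, hyf, dif_pos i.isLt]
    have hP0 : P 0 = 0 := by simp [hP, prefixSet]
    have hstep : ∀ k, P (k + 1) = P k + yf k := by
      intro k
      by_cases hk : k < L
      · obtain ⟨hnotmem, heq⟩ := prefix_step Astar hnodup hk
        simp only [hP, heq, Finset.sum_insert hnotmem, hyf, dif_pos hk]
        ring
      · have hlen : Astar.length ≤ k := le_of_not_gt hk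
        have : Astar.take (k + 1) = Astar.take k := by
          rw [List.take_of_length_le hlen, List.take_of_length_le (by omega)]
        simp [hP, prefixSet, this, hyf, dif_neg hk]
    have h3 := abel_sum Wf yf P hP0 hstep L
    have hWL : Wf L = 0 := by simp [hWf]
    rw [h1, h2, h3, hWL, zero_mul, add_zero]
  -- xstar saturates prefix sets
  have hsat : ∀ k, k ≤ L → (∑ e ∈ prefixSet Astar k, xstar e) = f (prefixSet Astar k) := by
    intro k
    induction k with
    | zero => intro _; simp [prefixSet, hf0]
    | succ k ih =>
        intro hk1
        have hk : k < L := by omega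
        obtain ⟨hnotmem, heq⟩ := prefix_step Astar hnodup hk
        have hg := hxstar ⟨k, hk⟩
        rw [heq, Finset.sum_insert hnotmem, ih (by omega), hg]
        simp [gain]
  rw [key x, key xstar]
  apply Finset.sum_le_sum
  intro k hk
  have hkL : k < L := Finset.mem_range.mp hk
  have hd : 0 ≤ Wf k - Wf (k + 1) := by
    have hWk : Wf k = w (Astar.get ⟨k, hkL⟩) := dif_pos hkL
    by_cases h : k + 1 < L
    · have hle : w (Astar.get ⟨k + 1, h⟩) ≤ w (Astar.get ⟨k, hkL⟩) := by
        have := List.pairwise_iff_get.mp hsorted ⟨k, hkL⟩ ⟨k + 1, h⟩ (by simp)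
        exact this
      have hWk1 : Wf (k + 1) = w (Astar.get ⟨k + 1, h⟩) := dif_pos h
      rw [hWk, hWk1]
      linarith
    · have hWk1 : Wf (k + 1) = 0 := dif_neg h
      rw [hWk, hWk1]
      simpa using hw _
  apply mul_le_mul_of_nonneg_left _ hd
  rw [hsat (k + 1) (by omega)]
  exact hxP _
end

section
/- (Lemma 1, first claim) Let E be a finite set of items, T a finite set of topics, and cover : E → 2^T a map assigning to each item the set of topics it covers. Define the diversity function f(X) = |{t ∈ T : ∃ e ∈ X, t ∈ cover(e)}|, the number of topics covered by X. Let w : E → ℝ be utilities and A* = (a*₁, …, a*_L) an ordering of E with w(a*₁) ≥ … ≥ w(a*_L). Fix a topic t and suppose item e covers t and e is the unique highest-utility item covering t, i.e., w(e) > w(e′) for every e′ ≠ e that covers t. Then e has strictly positive marginal gain in A* (g_{A*}(e) > 0), and hence e belongs to the recommendation list S produced by the DUM algorithm (the subsequence of A* consisting of items with strictly positive marginal gain). -/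
open Finset

open Classical in
/-- The recommendation list produced by the DUM algorithm from the ordering `A`:
the subsequence of `A` consisting of the items with strictly positive marginal gain. -/
noncomputable def dumList {E : Type*} [DecidableEq E] (f : Finset E → ℝ) (A : List E) :
    List E :=
  ((List.finRange A.length).filter (fun i => decide (0 < gain f A i))).map A.get

/-- The topic-coverage diversity function: the number of topics covered by `X`. -/
def coverDiversity {E T : Type*} [DecidableEq E] [DecidableEq T]
    (cover : E → Finset T) (X : Finset E) : ℝ :=
  ((X.biUnion cover).card : ℝ)

/-- Lemma 1, first claim: if `e` is the unique highest-utility item covering topic `t`,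
then `e` has strictly positive marginal gain in the decreasing-utility ordering `A*`,
and hence belongs to the DUM recommendation list. -/
theorem stmt_5 {E T : Type*} [Fintype E] [DecidableEq E] [Fintype T] [DecidableEq T]
    (cover : E → Finset T) (w : E → ℝ)
    (Astar : List E) (hnodup : Astar.Nodup) (hfull : ∀ e : E, e ∈ Astar)
    (hsorted : Astar.Pairwise (fun a b => w b ≤ w a))
    (e : E) (t : T) (ht : t ∈ cover e)
    (hbest : ∀ e' : E, e' ≠ e → t ∈ cover e' → w e' < w e) :
    (∀ i : Fin Astar.length, Astar.get i = e → 0 < gain (coverDiversity cover) Astar i) ∧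
    e ∈ dumList (coverDiversity cover) Astar :=  by
  have key : ∀ i : Fin Astar.length, Astar.get i = e →
      0 < gain (coverDiversity cover) Astar i := by
    intro i hi
    have hnotcov : t ∉ (prefixSet Astar i.val).biUnion cover := by
      intro hmem
      rcases Finset.mem_biUnion.1 hmem with ⟨x, hx, htx⟩
      have hx' : x ∈ Astar.take i.val := List.mem_toFinset.1 hx
      rcases List.mem_take_iff_getElem.1 hx' with ⟨j, hj, hjx⟩
      have hjlt : j < i.val := lt_of_lt_of_le hj (min_le_left _ _)
      have hjlen : j < Astar.length := lt_trans hjlt i.isLt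
      have hne : x ≠ e := by
        intro h
        subst h
        have : (⟨j, hjlen⟩ : Fin Astar.length) = i := by
          apply List.nodup_iff_injective_get.1 hnodup
          show Astar[j] = Astar[i.val]
          rw [hjx]; exact hi.symm
        exact absurd (congrArg Fin.val this) (Nat.ne_of_lt hjlt)
      have hle : w (Astar.get i) ≤ w x := by
        have := List.pairwise_iff_get.1 hsorted ⟨j, hjlen⟩ i hjlt
        simpa [← hjx] using this
      have := hbest x hne htx
      rw [hi] at hle
      linarith
    have hsub : (prefixSet Astar i.val).biUnion cover ⊂
        (insert (Astar.get i) (prefixSet Astar i.val)).biUnion cover := by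
      constructor
      · exact Finset.biUnion_subset_biUnion_of_subset_left _
          (Finset.subset_insert _ _)
      · intro hsub
        apply hnotcov
        apply hsub
        rw [Finset.mem_biUnion]
        exact ⟨Astar.get i, Finset.mem_insert_self _ _, by rw [hi]; exact ht⟩
    have hcard := Finset.card_lt_card hsub
    have : (((prefixSet Astar i.val).biUnion cover).card : ℝ) <
        (((insert (Astar.get i) (prefixSet Astar i.val)).biUnion cover).card : ℝ) := by
      exact_mod_cast hcard
    simp only [gain, coverDiversity]
    linarith
  refine ⟨key, ?_⟩
  rcases List.mem_iff_get.1 (hfull e) with ⟨i, hi⟩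
  simp only [dumList, List.mem_map]
  refine ⟨i, ?_, hi⟩
  simp [List.mem_filter, key i hi]
end

section
/- (Lemma 2, first claim) Let E be a finite set of items, T a finite set of topics, cover : E → 2^T, and for each topic t let N_t be a nonnegative integer. Define the capped diversity function f(X) = ∑_{t∈T} min(|{e ∈ X : t ∈ cover(e)}|, N_t). Let w : E → ℝ be utilities with pairwise distinct values, and A* an ordering of E with w(a*₁) > … > w(a*_L). Fix a topic t and an item e covering t such that e is among the N_t highest-utility items covering t, i.e., |{e′ ∈ E : e′ covers t and w(e′) > w(e)}| < N_t. Then e has strictly positive marginal gain in A* (g_{A*}(e) > 0), and hence e belongs to the recommendation list S produced by the DUM algorithm. Consequently, for every topic t, S contains the min(N_t, m_t) highest-utility items covering t, where m_t is the total number of items covering t. -/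
open Finset

/-- The capped topic-coverage diversity function
`f(X) = ∑_{t∈T} min(|{e ∈ X : t ∈ cover(e)}|, N_t)`. -/
def cappedDiversity {E T : Type*} [Fintype T] [DecidableEq E] [DecidableEq T]
    (cover : E → Finset T) (N : T → ℕ) (X : Finset E) : ℝ :=
  ∑ t : T, ((min ((X.filter (fun e => t ∈ cover e)).card) (N t) : ℕ) : ℝ)

open Classical in
theorem aux_main {E T : Type*} [Fintype E] [DecidableEq E] [Fintype T] [DecidableEq T]
    (cover : E → Finset T) (N : T → ℕ)
    (w : E → ℝ)
    (Astar : List E) (hnodup : Astar.Nodup)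
    (hsorted : Astar.Pairwise (fun a b => w b < w a))
    (e : E) (t : T) (ht : t ∈ cover e)
    (htop : (Finset.univ.filter (fun e' : E => t ∈ cover e' ∧ w e < w e')).card < N t)
    (i : Fin Astar.length) (hi : Astar.get i = e) :
    0 < gain (cappedDiversity cover N) Astar i := by
  set P := prefixSet Astar i.val with hP
  -- membership in the prefix gives an earlier index
  have hmem : ∀ x ∈ P, ∃ j : Fin Astar.length, j.val < i.val ∧ Astar.get j = x := by
    intro x hx
    rw [hP, prefixSet, List.mem_toFinset] at hx
    obtain ⟨j, hj⟩ := List.mem_iff_get.mp hx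
    have hjlt : j.val < i.val := by
      have h := j.isLt
      simp [List.length_take] at h
      omega
    refine ⟨⟨j.val, lt_trans hjlt i.isLt⟩, hjlt, ?_⟩
    simpa [List.get_eq_getElem, List.getElem_take] using hj
  have henP : e ∉ P := by
    intro hx
    obtain ⟨j, hjlt, hje⟩ := hmem e hx
    have : j = i := (List.nodup_iff_injective_get.mp hnodup) (by rw [hje, hi])
    omega
  have hw : ∀ x ∈ P, w e < w x := by
    intro x hx
    obtain ⟨j, hjlt, hje⟩ := hmem x hx
    have := List.pairwise_iff_get.mp hsorted ⟨j.val, j.isLt⟩ i (by exact hjlt)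
    rw [← hi, ← hje]
    simpa using this
  have hsub : P.filter (fun e' => t ∈ cover e') ⊆
      Finset.univ.filter (fun e' : E => t ∈ cover e' ∧ w e < w e') := by
    intro x hx
    rw [Finset.mem_filter] at hx ⊢
    exact ⟨Finset.mem_univ x, hx.2, hw x hx.1⟩
  have hcard : (P.filter (fun e' => t ∈ cover e')).card < N t :=
    lt_of_le_of_lt (Finset.card_le_card hsub) htop
  rw [gain, sub_pos, hi, cappedDiversity, cappedDiversity]
  apply Finset.sum_lt_sum
  · intro t' _
    have : (P.filter (fun e' => t' ∈ cover e')).card ≤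
        ((insert e P).filter (fun e' => t' ∈ cover e')).card :=
      Finset.card_le_card (Finset.filter_subset_filter _ (Finset.subset_insert e P))
    exact_mod_cast min_le_min this le_rfl
  · refine ⟨t, Finset.mem_univ t, ?_⟩
    have : (insert e P).filter (fun e' => t ∈ cover e') =
        insert e (P.filter (fun e' => t ∈ cover e')) := by
      rw [Finset.filter_insert, if_pos ht]
    rw [this, Finset.card_insert_of_notMem (fun h => henP (Finset.mem_filter.mp h).1)]
    have h1 : min (P.filter (fun e' => t ∈ cover e')).card (N t)
        = (P.filter (fun e' => t ∈ cover e')).card := min_eq_left hcard.le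
    have h2 : min ((P.filter (fun e' => t ∈ cover e')).card + 1) (N t)
        = (P.filter (fun e' => t ∈ cover e')).card + 1 := min_eq_left hcard
    rw [h1, h2]
    exact_mod_cast Nat.lt_succ_self _

open Classical in
theorem aux_mem {E T : Type*} [Fintype E] [DecidableEq E] [Fintype T] [DecidableEq T]
    (cover : E → Finset T) (N : T → ℕ)
    (w : E → ℝ)
    (Astar : List E) (hnodup : Astar.Nodup) (hfull : ∀ e : E, e ∈ Astar)
    (hsorted : Astar.Pairwise (fun a b => w b < w a))
    (e : E) (t : T) (ht : t ∈ cover e)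
    (htop : (Finset.univ.filter (fun e' : E => t ∈ cover e' ∧ w e < w e')).card < N t) :
    e ∈ dumList (cappedDiversity cover N) Astar := by
  obtain ⟨i, hi⟩ := List.mem_iff_get.mp (hfull e)
  rw [dumList, List.mem_map]
  refine ⟨i, List.mem_filter.mpr ⟨List.mem_finRange i, ?_⟩, hi⟩
  simp only [decide_eq_true_eq]
  exact aux_main cover N w Astar hnodup hsorted e t ht htop i hi

open Classical in
/-- Lemma 2, first claim: if `e` is among the `N_t` highest-utility items covering topic `t`,
then `e` has strictly positive marginal gain in the strictly-decreasing-utility ordering `A*`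
and hence belongs to the DUM recommendation list `S`; consequently, for every topic, `S`
contains the `min(N_t, m_t)` highest-utility items covering that topic. -/
theorem stmt_7 {E T : Type*} [Fintype E] [DecidableEq E] [Fintype T] [DecidableEq T]
    (cover : E → Finset T) (N : T → ℕ)
    (w : E → ℝ) (hwinj : Function.Injective w)
    (Astar : List E) (hnodup : Astar.Nodup) (hfull : ∀ e : E, e ∈ Astar)
    (hsorted : Astar.Pairwise (fun a b => w b < w a))
    (e : E) (t : T) (ht : t ∈ cover e)
    (htop : (Finset.univ.filter (fun e' : E => t ∈ cover e' ∧ w e < w e')).card < N t) :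
    ((∀ i : Fin Astar.length, Astar.get i = e →
        0 < gain (cappedDiversity cover N) Astar i) ∧
      e ∈ dumList (cappedDiversity cover N) Astar) ∧
    (∀ (t' : T) (e' : E), t' ∈ cover e' →
      (Finset.univ.filter (fun e'' : E => t' ∈ cover e'' ∧ w e' < w e'')).card < N t' →
      e' ∈ dumList (cappedDiversity cover N) Astar) := by
  exact ⟨⟨fun i hi => aux_main cover N w Astar hnodup hsorted e t ht htop i hi,
      aux_mem cover N w Astar hnodup hfull hsorted e t ht htop⟩,
    fun t' e' h1 h2 => aux_mem cover N w Astar hnodup hfull hsorted e' t' h1 h2⟩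
end

section
/- (DUM objective value identity) Let E be a finite set of items, w : E → ℝ positive utilities, and f : 2^E → ℝ a monotonically increasing submodular function with f(∅) = 0. Let A* = (a*₁, …, a*_L) be the ordering of E by decreasing utility and S the subsequence of A* consisting of items with strictly positive marginal gain. Then the value of the DUM objective on S, computed with marginal gains taken along S itself (i.e., ∑_{i} (f(S_{i-1} ∪ {s_i}) − f(S_{i-1})) · w(s_i) where S_i is the set of the first i items of S), equals the value ∑_{k=1}^{L} g_{A*}(a*_k) · w(a*_k) of the objective on the full ordering A*. -/
open Finset

lemma prefixSet_cons_succ {E : Type*} [DecidableEq E] (x : E) (A : List E) (i : ℕ) :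
    prefixSet (x :: A) (i + 1) = insert x (prefixSet A i) := by
  simp [prefixSet]

lemma gain_cons_succ {E : Type*} [DecidableEq E] (f : Finset E → ℝ) (x : E) (A : List E)
    (i : Fin A.length) :
    gain f (x :: A) i.succ = gain (fun T => f (insert x T)) A i := by
  have h : (x :: A).get i.succ = A.get i := rfl
  simp only [gain, h, Fin.val_succ, prefixSet_cons_succ]
  rw [Finset.insert_comm]

lemma gain_cons_zero {E : Type*} [DecidableEq E] (f : Finset E → ℝ) (x : E) (A : List E) :
    gain f (x :: A) (0 : Fin (A.length + 1)) = f {x} - f ∅ := by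
  simp [gain, prefixSet]

open Classical in
lemma dumList_cons {E : Type*} [DecidableEq E] (f : Finset E → ℝ) (x : E) (A : List E) :
    dumList f (x :: A) =
      (if 0 < f {x} - f ∅ then [x] else []) ++ dumList (fun T => f (insert x T)) A := by
  unfold dumList
  rw [show List.finRange (x :: A).length = 0 :: (List.finRange A.length).map Fin.succ from
    List.finRange_succ]
  rw [List.filter_cons, List.filter_map]
  have hfc : ∀ i ∈ List.finRange A.length,
      ((fun i : Fin (x :: A).length => decide (0 < gain f (x :: A) i)) ∘ Fin.succ) i
        = (fun i => decide (0 < gain (fun T => f (insert x T)) A i)) i := by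
    intro i _
    exact decide_eq_decide.mpr (by rw [gain_cons_succ])
  rw [List.filter_congr hfc]
  have hget : (x :: A).get ∘ Fin.succ = A.get := by funext i; rfl
  rw [gain_cons_zero]
  by_cases hpos : 0 < f {x} - f ∅ <;>
    simp [hpos, List.map_map, hget]

lemma get_cons_succ' {E : Type*} (x : E) (A : List E) (i : Fin A.length) :
    (x :: A).get i.succ = A.get i := rfl

lemma get_cons_zero' {E : Type*} (x : E) (A : List E) :
    (x :: A).get (0 : Fin (A.length + 1)) = x := rfl

lemma key {E : Type*} [DecidableEq E] (w : E → ℝ) (A : List E) :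
    ∀ (f : Finset E → ℝ),
      (∀ X Y : Finset E, X ⊆ Y → f X ≤ f Y) →
      (∀ X Y : Finset E, f (X ∪ Y) + f (X ∩ Y) ≤ f X + f Y) →
      ∑ i : Fin (dumList f A).length, gain f (dumList f A) i * w ((dumList f A).get i)
        = ∑ k : Fin A.length, gain f A k * w (A.get k) := by
  induction A with
  | nil =>
    intro f _ _
    have hnil : dumList f ([] : List E) = [] := by
      simp [dumList, List.finRange_zero]
    rw [hnil]
  | cons x A' ih =>
    intro f hmono hsub
    have hmono' : ∀ X Y : Finset E, X ⊆ Y → f (insert x X) ≤ f (insert x Y) :=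
      fun X Y h => hmono _ _ (Finset.insert_subset_insert _ h)
    have hsub' : ∀ X Y : Finset E,
        f (insert x (X ∪ Y)) + f (insert x (X ∩ Y)) ≤ f (insert x X) + f (insert x Y) := by
      intro X Y
      have h := hsub (insert x X) (insert x Y)
      rw [Finset.insert_union, Finset.union_insert, Finset.insert_idem,
        show insert x X ∩ insert x Y = insert x (X ∩ Y) by ext a; simp [or_and_left]] at h
      exact h
    rw [dumList_cons]
    by_cases hpos : 0 < f {x} - f ∅
    · rw [if_pos hpos, List.singleton_append]
      simp only [List.length_cons]
      rw [Fin.sum_univ_succ, Fin.sum_univ_succ]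
      simp only [gain_cons_zero, gain_cons_succ, get_cons_zero', get_cons_succ']
      rw [ih (fun T => f (insert x T)) hmono' hsub']
    · rw [if_neg hpos, List.nil_append]
      have h0 : 0 ≤ f {x} - f ∅ := sub_nonneg.mpr (hmono _ _ (Finset.empty_subset _))
      have hz : f {x} - f ∅ = 0 := le_antisymm (not_lt.1 hpos) h0
      have hfeq : (fun T => f (insert x T)) = f := by
        funext T
        by_cases hxT : x ∈ T
        · rw [Finset.insert_eq_self.mpr hxT]
        · refine le_antisymm ?_ (hmono _ _ (Finset.subset_insert _ _))
          have h := hsub T {x}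
          rw [Finset.union_comm, ← Finset.insert_eq,
            Finset.inter_singleton_of_notMem hxT] at h
          linarith
      rw [hfeq, ih f hmono hsub]
      simp only [List.length_cons]
      rw [Fin.sum_univ_succ]
      simp only [gain_cons_zero, hz, zero_mul, zero_add, gain_cons_succ, hfeq,
        get_cons_succ']

/-- DUM objective value identity: the objective computed along the DUM list `S` itself
equals the objective on the full decreasing-utility ordering `A*`. -/
theorem stmt_13 {E : Type*} [Fintype E] [DecidableEq E]
    (f : Finset E → ℝ) (hf0 : f ∅ = 0)
    (hmono : ∀ X Y : Finset E, X ⊆ Y → f X ≤ f Y)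
    (hsub : ∀ X Y : Finset E, f (X ∪ Y) + f (X ∩ Y) ≤ f X + f Y)
    (w : E → ℝ) (hw : ∀ e : E, 0 < w e)
    (Astar : List E) (hnodup : Astar.Nodup) (hfull : ∀ e : E, e ∈ Astar)
    (hsorted : Astar.Pairwise (fun a b => w b ≤ w a)) :
    ∑ i : Fin (dumList f Astar).length,
        gain f (dumList f Astar) i * w ((dumList f Astar).get i) =
      ∑ k : Fin Astar.length, gain f Astar k * w (Astar.get k) :=
  key w Astar f hmono hsub
end
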